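/- Every point of ℝ² that does not lie on a σ-rational line has a dense orbit in ℝ² under the group Γ(σ) generated by h_σ and v_σ. -/

import Mathlib

open Set

noncomputable section

def hmap (σ : ℝ ≃ ℝ) : (ℝ × ℝ) ≃ (ℝ × ℝ) where
  toFun p := (p.1 + σ.symm p.2, p.2)
  invFun p := (p.1 - σ.symm p.2, p.2)
  left_inv p := by simp
  right_inv p := by simp

def vmap (σ : ℝ ≃ ℝ) : (ℝ × ℝ) ≃ (ℝ × ℝ) where
  toFun p := (p.1, p.2 + σ p.1)
  invFun p := (p.1, p.2 - σ p.1)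
  left_inv p := by simp
  right_inv p := by simp


def Xset : Set (ℝ × ℝ) := {p | p ≠ 0 ∧ 0 ≤ p.1 * p.2 ∧ p.1 ≠ 0}
def Yset : Set (ℝ × ℝ) := {p | p ≠ 0 ∧ p.1 * p.2 ≤ 0 ∧ p.2 ≠ 0}
def Omeg : Set (ℝ × ℝ) := {p | p ≠ 0}

def ratLines (σ : ℝ ≃ ℝ) : Set (Set (ℝ × ℝ)) :=
  {{p : ℝ × ℝ | p.2 = 0}, {p : ℝ × ℝ | p.1 = 0}} ∪
  ((fun w : Function.End (ℝ × ℝ) => w '' {p : ℝ × ℝ | p.2 = 0}) ''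
    ↑(Submonoid.closure {(⇑(hmap σ) : Function.End (ℝ × ℝ)), ⇑(vmap σ)} : Submonoid (Function.End (ℝ × ℝ)))) ∪
  ((fun w : Function.End (ℝ × ℝ) => w '' {p : ℝ × ℝ | p.1 = 0}) ''
    ↑(Submonoid.closure {(⇑(hmap σ).symm : Function.End (ℝ × ℝ)), ⇑(vmap σ).symm} : Submonoid (Function.End (ℝ × ℝ))))

namespace StmtAux

variable (σ : ℝ ≃ ℝ)

@[simp] lemma hmap_apply (p : ℝ × ℝ) : hmap σ p = (p.1 + σ.symm p.2, p.2) := rfl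
@[simp] lemma vmap_apply (p : ℝ × ℝ) : vmap σ p = (p.1, p.2 + σ p.1) := rfl
@[simp] lemma hmap_symm_apply (p : ℝ × ℝ) : (hmap σ).symm p = (p.1 - σ.symm p.2, p.2) := rfl
@[simp] lemma vmap_symm_apply (p : ℝ × ℝ) : (vmap σ).symm p = (p.1, p.2 - σ p.1) := rfl

section Basic

lemma sigma0 (hodd : ∀ x : ℝ, σ (-x) = -σ x) : σ 0 = 0 := by
  have h := hodd 0
  simp only [neg_zero] at h
  linarith

lemma symm0 (hodd : ∀ x : ℝ, σ (-x) = -σ x) : σ.symm 0 = 0 := by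
  have := sigma0 σ hodd
  exact σ.symm_apply_eq.mpr this.symm

lemma symm_mono (hmono : StrictMono σ) : StrictMono (⇑σ.symm) := by
  intro a b hab
  have h := hmono.lt_iff_lt (a := σ.symm a) (b := σ.symm b)
  rw [σ.apply_symm_apply, σ.apply_symm_apply] at h
  exact h.mp hab

lemma symm_odd (hodd : ∀ x : ℝ, σ (-x) = -σ x) : ∀ x : ℝ, σ.symm (-x) = -σ.symm x := by
  intro x
  rw [σ.symm_apply_eq, hodd, σ.apply_symm_apply]

lemma sigma_pos (hmono : StrictMono σ) (hodd : ∀ x : ℝ, σ (-x) = -σ x)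
    {x : ℝ} (hx : 0 < x) : 0 < σ x := by
  have h := hmono hx
  rwa [sigma0 σ hodd] at h

lemma symm_pos (hmono : StrictMono σ) (hodd : ∀ x : ℝ, σ (-x) = -σ x)
    {x : ℝ} (hx : 0 < x) : 0 < σ.symm x := by
  have h := symm_mono σ hmono hx
  rwa [symm0 σ hodd] at h

def oiso (hmono : StrictMono σ) : ℝ ≃o ℝ :=
  { toEquiv := σ, map_rel_iff' := by intro a b; exact hmono.le_iff_le }

lemma sigma_cont (hmono : StrictMono σ) : Continuous ⇑σ := (oiso σ hmono).continuous

lemma sigma_symm_cont (hmono : StrictMono σ) : Continuous ⇑σ.symm :=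
  (oiso σ hmono).symm.continuous

end Basic

/-- generators indexed by Bool: `true ↦ hmap`, `false ↦ vmap`. -/
def gen : Bool → Equiv.Perm (ℝ × ℝ) := fun b => if b then hmap σ else vmap σ

/-- the forward word associated to a list -/
def fwd (L : List Bool) : Equiv.Perm (ℝ × ℝ) := (L.map (gen σ)).prod

@[simp] lemma fwd_nil : fwd σ [] = 1 := rfl

lemma fwd_cons (a : Bool) (t : List Bool) : fwd σ (a :: t) = gen σ a * fwd σ t := by
  simp [fwd]

lemma fwd_append (A B : List Bool) : fwd σ (A ++ B) = fwd σ A * fwd σ B := by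
  simp [fwd]

lemma fwd_replicate_false (n : ℕ) : fwd σ (List.replicate n false) = (vmap σ) ^ n := by
  simp [fwd, gen]

lemma fwd_replicate_true (n : ℕ) : fwd σ (List.replicate n true) = (hmap σ) ^ n := by
  simp [fwd, gen]

lemma vmap_pow (n : ℕ) (q : ℝ × ℝ) : ((vmap σ) ^ n) q = (q.1, q.2 + n * σ q.1) := by
  induction n generalizing q with
  | zero => simp
  | succ n ih =>
    rw [pow_succ, Equiv.Perm.mul_apply, ih]
    simp only [vmap_apply, Prod.mk.injEq]
    push_cast
    constructor <;> [trivial; ring]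

lemma hmap_pow (n : ℕ) (q : ℝ × ℝ) : ((hmap σ) ^ n) q = (q.1 + n * σ.symm q.2, q.2) := by
  induction n generalizing q with
  | zero => simp
  | succ n ih =>
    rw [pow_succ, Equiv.Perm.mul_apply, ih]
    simp only [hmap_apply, Prod.mk.injEq]
    push_cast
    constructor <;> [ring; trivial]

lemma vmap_pow_symm (n : ℕ) (q : ℝ × ℝ) :
    ((vmap σ) ^ n).symm q = (q.1, q.2 - n * σ q.1) := by
  rw [Equiv.symm_apply_eq, vmap_pow]
  have h : q.2 - ↑n * σ q.1 + ↑n * σ q.1 = q.2 := by ring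
  simp only [h]

lemma hmap_pow_symm (n : ℕ) (q : ℝ × ℝ) :
    ((hmap σ) ^ n).symm q = (q.1 - n * σ.symm q.2, q.2) := by
  rw [Equiv.symm_apply_eq, hmap_pow]
  have h : q.1 - ↑n * σ.symm q.2 + ↑n * σ.symm q.2 = q.1 := by ring
  simp only [h]

lemma hmap_zpow (m : ℤ) (q : ℝ × ℝ) : ((hmap σ) ^ m) q = (q.1 + m * σ.symm q.2, q.2) := by
  rcases m with n | n
  · rw [Int.ofNat_eq_coe, zpow_natCast, hmap_pow]; norm_num
  · rw [zpow_negSucc]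
    have : ((hmap σ) ^ (n + 1))⁻¹ q = ((hmap σ) ^ (n + 1)).symm q := rfl
    rw [this, hmap_pow_symm]
    simp only [Prod.mk.injEq, Int.cast_negSucc]
    push_cast
    constructor <;> [ring; trivial]

lemma vmap_zpow (m : ℤ) (q : ℝ × ℝ) : ((vmap σ) ^ m) q = (q.1, q.2 + m * σ q.1) := by
  rcases m with n | n
  · rw [Int.ofNat_eq_coe, zpow_natCast, vmap_pow]; norm_num
  · rw [zpow_negSucc]
    have : ((vmap σ) ^ (n + 1))⁻¹ q = ((vmap σ) ^ (n + 1)).symm q := rfl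
    rw [this, vmap_pow_symm]
    simp only [Prod.mk.injEq, Int.cast_negSucc]
    push_cast
    constructor <;> [trivial; ring]

/-- membership in the subgroup -/
lemma fwd_mem (L : List Bool) :
    fwd σ L ∈ Subgroup.closure ({hmap σ, vmap σ} : Set (Equiv.Perm (ℝ × ℝ))) := by
  induction L with
  | nil => rw [fwd_nil]; exact Subgroup.one_mem _
  | cons a t ih =>
    rw [fwd_cons]
    refine mul_mem ?_ ih
    apply Subgroup.subset_closure
    cases a <;> simp [gen]

lemma aux_mem (M : Submonoid (Function.End (ℝ × ℝ)))
    (hh : (⇑(hmap σ) : Function.End (ℝ × ℝ)) ∈ M)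
    (hv : (⇑(vmap σ) : Function.End (ℝ × ℝ)) ∈ M) (L : List Bool) :
    (⇑(fwd σ L) : Function.End (ℝ × ℝ)) ∈ M := by
  induction L with
  | nil => exact Submonoid.one_mem M
  | cons a t ih =>
    rw [fwd_cons]
    have h1 : (⇑(gen σ a) : Function.End (ℝ × ℝ)) ∈ M := by cases a <;> simpa [gen]
    have h2 := Submonoid.mul_mem M h1 ih; exact h2

lemma aux_mem_symm (M : Submonoid (Function.End (ℝ × ℝ)))
    (hh : (⇑(hmap σ).symm : Function.End (ℝ × ℝ)) ∈ M)
    (hv : (⇑(vmap σ).symm : Function.End (ℝ × ℝ)) ∈ M) (L : List Bool) :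
    (⇑(fwd σ L).symm : Function.End (ℝ × ℝ)) ∈ M := by
  induction L with
  | nil => exact Submonoid.one_mem M
  | cons a t ih =>
    rw [fwd_cons]
    have h1 : (⇑(gen σ a).symm : Function.End (ℝ × ℝ)) ∈ M := by cases a <;> simpa [gen]
    have h2 := Submonoid.mul_mem M ih h1; exact h2

lemma coe_fwd_mem_monoid (L : List Bool) :
    (⇑(fwd σ L) : Function.End (ℝ × ℝ)) ∈
      (Submonoid.closure {(⇑(hmap σ) : Function.End (ℝ × ℝ)), ⇑(vmap σ)} :
        Submonoid (Function.End (ℝ × ℝ))) := by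
  refine aux_mem σ _ ?_ ?_ L
  · exact Submonoid.subset_closure (Set.mem_insert _ _)
  · exact Submonoid.subset_closure (Set.mem_insert_of_mem _ rfl)

lemma coe_fwd_symm_mem_monoid (L : List Bool) :
    (⇑(fwd σ L).symm : Function.End (ℝ × ℝ)) ∈
      (Submonoid.closure {(⇑(hmap σ).symm : Function.End (ℝ × ℝ)), ⇑(vmap σ).symm} :
        Submonoid (Function.End (ℝ × ℝ))) := by
  refine aux_mem_symm σ _ ?_ ?_ L
  · exact Submonoid.subset_closure (Set.mem_insert _ _)
  · exact Submonoid.subset_closure (Set.mem_insert_of_mem _ rfl)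


lemma fwd_singleton (a : Bool) : fwd σ [a] = gen σ a := by simp [fwd]

lemma mul_symm_apply (g h : Equiv.Perm (ℝ × ℝ)) (x : ℝ × ℝ) :
    (g * h).symm x = h.symm (g.symm x) := rfl

lemma fwd_append_symm_apply (A B : List Bool) (x : ℝ × ℝ) :
    (fwd σ (A ++ B)).symm x = (fwd σ B).symm ((fwd σ A).symm x) := by
  rw [fwd_append, mul_symm_apply]

@[simp] lemma fwd_nil_symm_apply (x : ℝ × ℝ) : (fwd σ []).symm x = x := rfl

/-- ### the flip map (x,y) ↦ (x,-y) -/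
def flipP : (ℝ × ℝ) ≃ (ℝ × ℝ) where
  toFun p := (p.1, -p.2)
  invFun p := (p.1, -p.2)
  left_inv p := by simp
  right_inv p := by simp

/-- ### the negation map -/
def negP : (ℝ × ℝ) ≃ (ℝ × ℝ) where
  toFun p := (-p.1, -p.2)
  invFun p := (-p.1, -p.2)
  left_inv p := by simp
  right_inv p := by simp

@[simp] lemma flipP_apply (p : ℝ × ℝ) : flipP p = (p.1, -p.2) := rfl
@[simp] lemma negP_apply (p : ℝ × ℝ) : negP p = (-p.1, -p.2) := rfl

section Transport

lemma gen_neg (hodd : ∀ x : ℝ, σ (-x) = -σ x) (b : Bool) (p : ℝ × ℝ) : gen σ b (negP p) = negP (gen σ b p) := by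
  cases b <;> simp [gen, hodd, symm_odd σ hodd] <;> ring

lemma gen_symm_neg (hodd : ∀ x : ℝ, σ (-x) = -σ x) (b : Bool) (p : ℝ × ℝ) :
    (gen σ b).symm (negP p) = negP ((gen σ b).symm p) := by
  apply (gen σ b).injective
  rw [Equiv.apply_symm_apply, gen_neg σ hodd, Equiv.apply_symm_apply]

lemma fwd_neg (hodd : ∀ x : ℝ, σ (-x) = -σ x) (L : List Bool) (p : ℝ × ℝ) : fwd σ L (negP p) = negP (fwd σ L p) := by
  induction L generalizing p with
  | nil => simp
  | cons a t ih =>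
    rw [fwd_cons, Equiv.Perm.mul_apply, Equiv.Perm.mul_apply, ih, gen_neg σ hodd]

lemma fwd_symm_neg (hodd : ∀ x : ℝ, σ (-x) = -σ x) (L : List Bool) (p : ℝ × ℝ) :
    (fwd σ L).symm (negP p) = negP ((fwd σ L).symm p) := by
  apply (fwd σ L).injective
  rw [Equiv.apply_symm_apply, fwd_neg σ hodd, Equiv.apply_symm_apply]

lemma gen_symm_flip (hodd : ∀ x : ℝ, σ (-x) = -σ x) (b : Bool) (p : ℝ × ℝ) :
    (gen σ b).symm (flipP p) = flipP (gen σ b p) := by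
  cases b <;> simp [gen, symm_odd σ hodd] <;> ring

lemma gen_flip (hodd : ∀ x : ℝ, σ (-x) = -σ x) (b : Bool) (p : ℝ × ℝ) :
    gen σ b (flipP p) = flipP ((gen σ b).symm p) := by
  apply (gen σ b).symm.injective
  rw [Equiv.symm_apply_apply, gen_symm_flip σ hodd, Equiv.apply_symm_apply]

lemma fwd_symm_flip (hodd : ∀ x : ℝ, σ (-x) = -σ x) (L : List Bool) (p : ℝ × ℝ) :
    (fwd σ L).symm (flipP p) = flipP (fwd σ L.reverse p) := by
  induction L generalizing p with
  | nil => simp [Equiv.Perm.one_symm]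
  | cons a t ih =>
    rw [fwd_cons, mul_symm_apply, gen_symm_flip σ hodd, ih, List.reverse_cons,
      fwd_append, Equiv.Perm.mul_apply, fwd_singleton]

lemma fwd_flip (hodd : ∀ x : ℝ, σ (-x) = -σ x) (L : List Bool) (p : ℝ × ℝ) :
    fwd σ L (flipP p) = flipP ((fwd σ L.reverse).symm p) := by
  apply (fwd σ L).symm.injective
  rw [Equiv.symm_apply_apply, fwd_symm_flip σ hodd, Equiv.apply_symm_apply]

end Transport

/-- ### the coordinate swap -/
def swapP : (ℝ × ℝ) ≃ (ℝ × ℝ) := Equiv.prodComm ℝ ℝ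

@[simp] lemma swapP_apply (p : ℝ × ℝ) : swapP p = (p.2, p.1) := rfl

lemma gen_swap (b : Bool) (p : ℝ × ℝ) :
    gen σ.symm b (swapP p) = swapP (gen σ (!b) p) := by
  cases b <;> simp [gen]

lemma gen_symm_swap (b : Bool) (p : ℝ × ℝ) :
    (gen σ.symm b).symm (swapP p) = swapP ((gen σ (!b)).symm p) := by
  apply (gen σ.symm b).injective
  rw [Equiv.apply_symm_apply, gen_swap, Equiv.apply_symm_apply]

lemma fwd_symm_swap (L : List Bool) (p : ℝ × ℝ) :
    (fwd σ.symm L).symm (swapP p) = swapP ((fwd σ (L.map not)).symm p) := by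
  induction L generalizing p with
  | nil => simp [Equiv.Perm.one_symm]
  | cons a t ih =>
    rw [fwd_cons, mul_symm_apply, gen_symm_swap, ih, List.map_cons, fwd_cons,
      mul_symm_apply]

/-- ### extraction of the irrationality hypotheses -/

lemma irrat_axes {p : ℝ × ℝ} (hp : ∀ L ∈ ratLines σ, p ∉ L) : p.1 ≠ 0 ∧ p.2 ≠ 0 := by
  constructor
  · intro h
    exact hp {q : ℝ × ℝ | q.1 = 0} (Or.inl (Or.inl (Set.mem_insert_of_mem _ rfl))) h
  · intro h
    exact hp {q : ℝ × ℝ | q.2 = 0} (Or.inl (Or.inl (Set.mem_insert _ _))) h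

lemma irrat_x {p : ℝ × ℝ} (hp : ∀ L ∈ ratLines σ, p ∉ L) (L : List Bool) :
    ((fwd σ L).symm p).2 ≠ 0 := by
  intro h0
  refine hp ((⇑(fwd σ L) : Function.End (ℝ × ℝ)) '' {q : ℝ × ℝ | q.2 = 0}) ?_ ?_
  · exact Or.inl (Or.inr ⟨⇑(fwd σ L), coe_fwd_mem_monoid σ L, rfl⟩)
  · exact ⟨(fwd σ L).symm p, h0, Equiv.apply_symm_apply _ _⟩

lemma irrat_y {p : ℝ × ℝ} (hp : ∀ L ∈ ratLines σ, p ∉ L) (L : List Bool) :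
    ((fwd σ L) p).1 ≠ 0 := by
  intro h0
  refine hp ((⇑(fwd σ L).symm : Function.End (ℝ × ℝ)) '' {q : ℝ × ℝ | q.1 = 0}) ?_ ?_
  · exact Or.inr ⟨⇑(fwd σ L).symm, coe_fwd_symm_mem_monoid σ L, rfl⟩
  · exact ⟨(fwd σ L) p, h0, Equiv.symm_apply_apply _ _⟩


/-- ### the Euclidean algorithm, one step (in the open first quadrant) -/
lemma euclid_step (hmono : StrictMono σ) (hodd : ∀ x : ℝ, σ (-x) = -σ x) (p : ℝ × ℝ)
    (hax : ∀ L : List Bool, ((fwd σ L).symm p).2 ≠ 0)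
    (L : List Bool) (h1 : 0 < ((fwd σ L).symm p).1) (h2 : 0 < ((fwd σ L).symm p).2) :
    ∃ L' : List Bool,
      0 < ((fwd σ L').symm p).1 ∧
      2 * ((fwd σ L').symm p).1 < ((fwd σ L).symm p).1 ∧
      0 < ((fwd σ L').symm p).2 ∧
      ((fwd σ L').symm p).2 < σ (((fwd σ L).symm p).1) := by
  set q : ℝ × ℝ := (fwd σ L).symm p with hq
  have hsx : 0 < σ q.1 := sigma_pos σ hmono hodd h1
  -- y-reduction
  set n : ℕ := (⌊q.2 / σ q.1⌋).toNat with hn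
  have hnc : (n : ℝ) = (⌊q.2 / σ q.1⌋ : ℤ) := by
    rw [hn]
    norm_cast
    exact Int.toNat_of_nonneg (Int.floor_nonneg.mpr (le_of_lt (div_pos h2 hsx)))
  set L1 : List Bool := L ++ List.replicate n false with hL1
  have hq1 : (fwd σ L1).symm p = (q.1, q.2 - n * σ q.1) := by
    rw [hL1, fwd_append_symm_apply, ← hq, fwd_replicate_false, vmap_pow_symm]
  set y1 : ℝ := q.2 - n * σ q.1 with hy1
  have hy1nonneg : 0 ≤ y1 := by
    have := Int.floor_le (q.2 / σ q.1)
    have h' : (n : ℝ) * σ q.1 ≤ q.2 := by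
      rw [hnc]
      calc (⌊q.2 / σ q.1⌋ : ℝ) * σ q.1 ≤ (q.2 / σ q.1) * σ q.1 :=
            mul_le_mul_of_nonneg_right this (le_of_lt hsx)
        _ = q.2 := div_mul_cancel₀ _ (ne_of_gt hsx)
    rw [hy1]; linarith
  have hy1lt : y1 < σ q.1 := by
    have := Int.lt_floor_add_one (q.2 / σ q.1)
    have h' : q.2 < ((n : ℝ) + 1) * σ q.1 := by
      rw [hnc]
      calc q.2 = (q.2 / σ q.1) * σ q.1 := (div_mul_cancel₀ _ (ne_of_gt hsx)).symm
        _ < ((⌊q.2 / σ q.1⌋ : ℝ) + 1) * σ q.1 := by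
            apply mul_lt_mul_of_pos_right this hsx
    rw [hy1]; nlinarith
  have hy1ne : y1 ≠ 0 := by
    have := hax L1
    rw [hq1] at this
    simpa using this
  have hy1pos : 0 < y1 := lt_of_le_of_ne hy1nonneg (Ne.symm hy1ne)
  -- x-reduction
  set s2 : ℝ := σ.symm y1 with hs2
  have hs2pos : 0 < s2 := symm_pos σ hmono hodd hy1pos
  have hs2lt : s2 < q.1 := by
    have := symm_mono σ hmono hy1lt
    rwa [Equiv.symm_apply_apply] at this
  have hrat : 1 < q.1 / s2 := (one_lt_div hs2pos).mpr hs2lt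
  set m : ℕ := (⌈q.1 / s2⌉ - 1).toNat with hm
  have hceil1 : (1 : ℤ) < ⌈q.1 / s2⌉ := by
    have hle := Int.le_ceil (q.1 / s2)
    have h' : (1 : ℝ) < (⌈q.1 / s2⌉ : ℝ) := lt_of_lt_of_le hrat hle
    exact_mod_cast h'
  have hmz : (m : ℤ) = ⌈q.1 / s2⌉ - 1 := by
    rw [hm]; exact Int.toNat_of_nonneg (by omega)
  have hmc : (m : ℝ) = (⌈q.1 / s2⌉ : ℤ) - 1 := by exact_mod_cast hmz
  have hm1 : 1 ≤ (m : ℝ) := by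
    have : (1 : ℤ) ≤ (m : ℤ) := by omega
    exact_mod_cast this
  set L2 : List Bool := L1 ++ List.replicate m true with hL2
  have hq2 : (fwd σ L2).symm p = (q.1 - m * s2, y1) := by
    rw [hL2, fwd_append_symm_apply, hq1, fwd_replicate_true, hmap_pow_symm]
  set x2 : ℝ := q.1 - m * s2 with hx2
  have hx2pos : 0 < x2 := by
    have hceil : (⌈q.1 / s2⌉ : ℝ) < q.1 / s2 + 1 := Int.ceil_lt_add_one _
    have : (m : ℝ) < q.1 / s2 := by rw [hmc]; linarith
    have h' : (m : ℝ) * s2 < q.1 := by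
      calc (m : ℝ) * s2 < (q.1 / s2) * s2 := mul_lt_mul_of_pos_right this hs2pos
        _ = q.1 := div_mul_cancel₀ _ (ne_of_gt hs2pos)
    rw [hx2]; linarith
  have hx2le : x2 ≤ s2 := by
    have hceil : q.1 / s2 ≤ (⌈q.1 / s2⌉ : ℝ) := Int.le_ceil _
    have : q.1 / s2 - 1 ≤ (m : ℝ) := by rw [hmc]; linarith
    have h' : q.1 - s2 ≤ (m : ℝ) * s2 := by
      calc q.1 - s2 = (q.1 / s2 - 1) * s2 := by field_simp
        _ ≤ (m : ℝ) * s2 := mul_le_mul_of_nonneg_right this (le_of_lt hs2pos)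
    rw [hx2]; linarith
  have hx2ne : x2 ≠ s2 := by
    intro heq
    have key := hax (L2 ++ [false])
    rw [fwd_append_symm_apply, hq2, fwd_singleton] at key
    apply key
    have : σ x2 = y1 := by rw [heq, hs2, Equiv.apply_symm_apply]
    simp [gen, this]
  have hx2lt : x2 < s2 := lt_of_le_of_ne hx2le hx2ne
  refine ⟨L2, ?_, ?_, ?_, ?_⟩
  · rw [hq2]; exact hx2pos
  · rw [hq2]
    show 2 * x2 < q.1
    have hms : (m : ℝ) * s2 ≥ s2 := by nlinarith
    nlinarith
  · rw [hq2]; exact hy1pos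
  · rw [hq2]; show y1 < σ q.1; exact hy1lt

/-- ### iterating: arbitrarily small points in the first quadrant -/
lemma euclid_small (hmono : StrictMono σ) (hodd : ∀ x : ℝ, σ (-x) = -σ x) (p : ℝ × ℝ)
    (hax : ∀ L : List Bool, ((fwd σ L).symm p).2 ≠ 0)
    (h1 : 0 < p.1) (h2 : 0 < p.2) {ε : ℝ} (hε : 0 < ε) :
    ∃ L : List Bool,
      0 < ((fwd σ L).symm p).1 ∧ ((fwd σ L).symm p).1 < ε ∧
      0 < ((fwd σ L).symm p).2 ∧ ((fwd σ L).symm p).2 < ε := by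
  have key : ∀ k : ℕ, ∃ L : List Bool,
      0 < ((fwd σ L).symm p).1 ∧ ((fwd σ L).symm p).1 ≤ p.1 / 2 ^ k ∧
      0 < ((fwd σ L).symm p).2 := by
    intro k
    induction k with
    | zero => exact ⟨[], by simpa [Equiv.Perm.one_symm] using ⟨h1, h2⟩⟩
    | succ k ih =>
      obtain ⟨L, hL1, hL2, hL3⟩ := ih
      obtain ⟨L', h1', h2', h3', _⟩ := euclid_step σ hmono hodd p hax L hL1 hL3
      refine ⟨L', h1', ?_, h3'⟩
      have hp2 : (0:ℝ) < 2 ^ k := by positivity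
      rw [pow_succ, le_div_iff₀ (by positivity)]
      rw [le_div_iff₀ hp2] at hL2
      nlinarith [h2', hp2, hL2]
  -- choose k with p.1 / 2^k < min ε (σ.symm ε)
  set δ : ℝ := min ε (σ.symm ε) with hδ
  have hδpos : 0 < δ := lt_min hε (symm_pos σ hmono hodd hε)
  obtain ⟨k, hk⟩ : ∃ k : ℕ, p.1 / 2 ^ k < δ := by
    obtain ⟨k, hk⟩ := pow_unbounded_of_one_lt (p.1 / δ) (by norm_num : (1:ℝ) < 2)
    refine ⟨k, ?_⟩
    rw [div_lt_iff₀ (by positivity)]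
    rw [div_lt_iff₀ hδpos] at hk
    linarith
  obtain ⟨L, hL1, hL2, hL3⟩ := key k
  obtain ⟨L', h1', h2', h3', h4'⟩ := euclid_step σ hmono hodd p hax L hL1 hL3
  have hx : ((fwd σ L).symm p).1 < δ := lt_of_le_of_lt hL2 hk
  refine ⟨L', h1', ?_, h3', ?_⟩
  · have : δ ≤ ε := min_le_left _ _
    linarith
  · have hlt : ((fwd σ L).symm p).1 < σ.symm ε := lt_of_lt_of_le hx (min_le_right _ _)
    have := hmono hlt
    rw [Equiv.apply_symm_apply] at this
    linarith


/-- ### the subgroup -/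
def Gam : Subgroup (Equiv.Perm (ℝ × ℝ)) := Subgroup.closure {hmap σ, vmap σ}

lemma fwd_mem_Gam (L : List Bool) : fwd σ L ∈ Gam σ := fwd_mem σ L

lemma hmap_mem_Gam : hmap σ ∈ Gam σ := Subgroup.subset_closure (Set.mem_insert _ _)
lemma vmap_mem_Gam : vmap σ ∈ Gam σ := Subgroup.subset_closure (Set.mem_insert_of_mem _ rfl)

lemma Gam_neg (hodd : ∀ x : ℝ, σ (-x) = -σ x) {g : Equiv.Perm (ℝ × ℝ)} (hg : g ∈ Gam σ) :
    ∀ q : ℝ × ℝ, g (negP q) = negP (g q) := by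
  induction hg using Subgroup.closure_induction with
  | mem x hx =>
    intro q
    rcases hx with h | h
    · subst h
      have := gen_neg σ hodd true q
      simpa [gen] using this
    · simp only [Set.mem_singleton_iff] at h
      subst h
      have := gen_neg σ hodd false q
      simpa [gen] using this
  | one => intro q; simp
  | mul x y hx hy ihx ihy =>
    intro q
    rw [Equiv.Perm.mul_apply, Equiv.Perm.mul_apply, ihy, ihx]
  | inv x hx ihx =>
    intro q
    apply x.injective
    have : x ((x⁻¹ : Equiv.Perm (ℝ × ℝ)) q) = q := by
      rw [← Equiv.Perm.mul_apply, mul_inv_cancel]; rfl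
    rw [← Equiv.Perm.mul_apply, mul_inv_cancel, Equiv.Perm.one_apply, ihx, this]

lemma small_orbit_posx (hmono : StrictMono σ) (hodd : ∀ x : ℝ, σ (-x) = -σ x) (p : ℝ × ℝ)
    (hax : ∀ L : List Bool, ((fwd σ L).symm p).2 ≠ 0)
    (hay : ∀ L : List Bool, ((fwd σ L) p).1 ≠ 0)
    (hx0 : 0 < p.1) (hy0 : p.2 ≠ 0) {ε : ℝ} (hε : 0 < ε) :
    ∃ g ∈ Gam σ, (g p).1 ≠ 0 ∧ (g p).2 ≠ 0 ∧ |(g p).1| < ε ∧ |(g p).2| < ε := by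
  rcases lt_or_gt_of_ne hy0 with hyneg | hypos
  · -- quadrant IV : transport via swap ∘ flip to quadrant I for σ.symm
    set pd : ℝ × ℝ := swapP (flipP p) with hpd
    have hpd1 : 0 < pd.1 := by simp [hpd]; linarith
    have hpd2 : 0 < pd.2 := by simpa [hpd] using hx0
    have htrans : ∀ M : List Bool,
        (fwd σ.symm M).symm pd = swapP (flipP (fwd σ ((M.map not).reverse) p)) := by
      intro M
      rw [hpd, fwd_symm_swap, fwd_symm_flip σ hodd]
    have haxd : ∀ M : List Bool, ((fwd σ.symm M).symm pd).2 ≠ 0 := by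
      intro M
      rw [htrans M]
      simpa using hay ((M.map not).reverse)
    obtain ⟨M, hM1, hM2, hM3, hM4⟩ :=
      euclid_small σ.symm (symm_mono σ hmono) (symm_odd σ hodd) pd haxd hpd1 hpd2 hε
    have h := htrans M
    have h1 : ((fwd σ.symm M).symm pd).1 = -((fwd σ ((M.map not).reverse)) p).2 := by
      rw [h]; rfl
    have h2 : ((fwd σ.symm M).symm pd).2 = ((fwd σ ((M.map not).reverse)) p).1 := by
      rw [h]; rfl
    rw [h1] at hM1 hM2
    rw [h2] at hM3 hM4
    refine ⟨fwd σ ((M.map not).reverse), fwd_mem_Gam σ _, ?_, ?_, ?_, ?_⟩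
    · exact ne_of_gt hM3
    · intro hcon
      rw [hcon] at hM1
      simp at hM1
    · rw [abs_of_pos hM3]; exact hM4
    · rw [abs_of_neg (by linarith : ((fwd σ ((M.map not).reverse)) p).2 < 0)]
      linarith
  · -- quadrant I
    obtain ⟨L, h1, h2, h3, h4⟩ := euclid_small σ hmono hodd p hax hx0 hypos hε
    refine ⟨(fwd σ L)⁻¹, inv_mem (fwd_mem_Gam σ L), ?_, ?_, ?_, ?_⟩ <;>
      have he : ((fwd σ L)⁻¹ : Equiv.Perm (ℝ × ℝ)) p = (fwd σ L).symm p := rfl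
    · rw [he]; exact ne_of_gt h1
    · rw [he]; exact ne_of_gt h3
    · rw [he, abs_of_pos h1]; exact h2
    · rw [he, abs_of_pos h3]; exact h4

lemma small_orbit (hmono : StrictMono σ) (hodd : ∀ x : ℝ, σ (-x) = -σ x) (p : ℝ × ℝ)
    (hax : ∀ L : List Bool, ((fwd σ L).symm p).2 ≠ 0)
    (hay : ∀ L : List Bool, ((fwd σ L) p).1 ≠ 0)
    (hx0 : p.1 ≠ 0) (hy0 : p.2 ≠ 0) {ε : ℝ} (hε : 0 < ε) :
    ∃ g ∈ Gam σ, (g p).1 ≠ 0 ∧ (g p).2 ≠ 0 ∧ |(g p).1| < ε ∧ |(g p).2| < ε := by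
  rcases lt_or_gt_of_ne hx0 with hxneg | hxpos
  · -- use negation
    have hax' : ∀ L : List Bool, ((fwd σ L).symm (negP p)).2 ≠ 0 := by
      intro L
      rw [fwd_symm_neg σ hodd]
      simpa using hax L
    have hay' : ∀ L : List Bool, ((fwd σ L) (negP p)).1 ≠ 0 := by
      intro L
      rw [fwd_neg σ hodd]
      simpa using hay L
    obtain ⟨g, hg, hg1, hg2, hg3, hg4⟩ :=
      small_orbit_posx σ hmono hodd (negP p) hax' hay'
        (by simpa using neg_pos.mpr hxneg) (by simpa using hy0) hε
    have hcomm : g (negP p) = negP (g p) := Gam_neg σ hodd hg p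
    rw [hcomm] at hg1 hg2 hg3 hg4
    refine ⟨g, hg, ?_, ?_, ?_, ?_⟩
    · simpa using hg1
    · simpa using hg2
    · rw [← abs_neg]; simpa using hg3
    · rw [← abs_neg]; simpa using hg4
  · exact small_orbit_posx σ hmono hodd p hax hay hxpos hy0 hε


/-- ### the orbit -/
def orb (p : ℝ × ℝ) : Set (ℝ × ℝ) := {q : ℝ × ℝ | ∃ g ∈ Gam σ, g p = q}

/-- continuity of elements of the group -/
lemma cont_hmap (hmono : StrictMono σ) : Continuous ⇑(hmap σ) := by
  have : ⇑(hmap σ) = fun q : ℝ × ℝ => (q.1 + σ.symm q.2, q.2) := rfl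
  rw [this]
  exact (continuous_fst.add ((sigma_symm_cont σ hmono).comp continuous_snd)).prodMk
    continuous_snd

lemma cont_hmap_symm (hmono : StrictMono σ) : Continuous ⇑(hmap σ).symm := by
  have : ⇑(hmap σ).symm = fun q : ℝ × ℝ => (q.1 - σ.symm q.2, q.2) := rfl
  rw [this]
  exact (continuous_fst.sub ((sigma_symm_cont σ hmono).comp continuous_snd)).prodMk
    continuous_snd

lemma cont_vmap (hmono : StrictMono σ) : Continuous ⇑(vmap σ) := by
  have : ⇑(vmap σ) = fun q : ℝ × ℝ => (q.1, q.2 + σ q.1) := rfl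
  rw [this]
  exact continuous_fst.prodMk (continuous_snd.add ((sigma_cont σ hmono).comp continuous_fst))

lemma cont_vmap_symm (hmono : StrictMono σ) : Continuous ⇑(vmap σ).symm := by
  have : ⇑(vmap σ).symm = fun q : ℝ × ℝ => (q.1, q.2 - σ q.1) := rfl
  rw [this]
  exact continuous_fst.prodMk (continuous_snd.sub ((sigma_cont σ hmono).comp continuous_fst))

lemma Gam_cont (hmono : StrictMono σ) {g : Equiv.Perm (ℝ × ℝ)} (hg : g ∈ Gam σ) :
    Continuous ⇑g ∧ Continuous ⇑(g⁻¹ : Equiv.Perm (ℝ × ℝ)) := by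
  induction hg using Subgroup.closure_induction with
  | mem x hx =>
    rcases hx with h | h
    · subst h
      constructor
      · exact cont_hmap σ hmono
      · have : ⇑((hmap σ)⁻¹ : Equiv.Perm (ℝ × ℝ)) = ⇑(hmap σ).symm := rfl
        rw [this]; exact cont_hmap_symm σ hmono
    · simp only [Set.mem_singleton_iff] at h
      subst h
      constructor
      · exact cont_vmap σ hmono
      · have : ⇑((vmap σ)⁻¹ : Equiv.Perm (ℝ × ℝ)) = ⇑(vmap σ).symm := rfl
        rw [this]; exact cont_vmap_symm σ hmono
  | one =>
    have hid : ⇑((1 : Equiv.Perm (ℝ × ℝ))) = id := rfl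
    constructor
    · rw [hid]; exact continuous_id
    · rw [inv_one, hid]; exact continuous_id
  | mul x y hx hy ihx ihy =>
    constructor
    · rw [Equiv.Perm.coe_mul]; exact ihx.1.comp ihy.1
    · rw [mul_inv_rev, Equiv.Perm.coe_mul]; exact ihy.2.comp ihx.2
  | inv x hx ihx =>
    refine ⟨ihx.2, ?_⟩
    rw [inv_inv]; exact ihx.1

lemma cont_fwd_symm (hmono : StrictMono σ) (L : List Bool) :
    Continuous ⇑(fwd σ L).symm := by
  have h := (Gam_cont σ hmono (inv_mem (fwd_mem_Gam σ L))).1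
  have : ⇑(((fwd σ L)⁻¹ : Equiv.Perm (ℝ × ℝ))) = ⇑(fwd σ L).symm := rfl
  rwa [this] at h

lemma orb_image_subset {p : ℝ × ℝ} {g : Equiv.Perm (ℝ × ℝ)} (hg : g ∈ Gam σ) :
    ⇑g '' orb σ p ⊆ orb σ p := by
  rintro x ⟨y, ⟨h, hh, rfl⟩, rfl⟩
  exact ⟨g * h, mul_mem hg hh, (Equiv.Perm.mul_apply _ _ _)⟩

lemma orbit_closure_invariant (hmono : StrictMono σ) {p : ℝ × ℝ} {g : Equiv.Perm (ℝ × ℝ)}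
    (hg : g ∈ Gam σ) {q : ℝ × ℝ} (hq : q ∈ closure (orb σ p)) :
    g q ∈ closure (orb σ p) := by
  have hcont := (Gam_cont σ hmono hg).1
  have h1 : g q ∈ ⇑g '' closure (orb σ p) := Set.mem_image_of_mem _ hq
  have h2 := image_closure_subset_closure_image (s := orb σ p) hcont h1
  exact closure_mono (orb_image_subset σ hg) h2

/-- integer approximation -/
lemma int_approx (c s : ℝ) (hs : s ≠ 0) : ∃ k : ℤ, |c - k * s| ≤ |s| := by
  refine ⟨⌊c / s⌋, ?_⟩
  have h : c - (⌊c / s⌋ : ℝ) * s = (c / s - ⌊c / s⌋) * s := by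
    rw [sub_mul, div_mul_cancel₀ _ hs]
  rw [h, abs_mul]
  have h1 : |c / s - (⌊c / s⌋ : ℝ)| ≤ 1 := by
    rw [abs_of_nonneg (by linarith [Int.floor_le (c / s)])]
    linarith [Int.lt_floor_add_one (c / s)]
  calc |c / s - (⌊c / s⌋ : ℝ)| * |s| ≤ 1 * |s| :=
        mul_le_mul_of_nonneg_right h1 (abs_nonneg s)
    _ = |s| := one_mul _

/-- transfer of smallness through σ -/
lemma abs_symm_lt (τ : ℝ ≃ ℝ) (hmono : StrictMono τ) (hodd : ∀ x : ℝ, τ (-x) = -τ x)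
    {y c : ℝ} (hc : 0 < c) (h : |y| < τ c) : |τ.symm y| < c := by
  rw [abs_lt] at h ⊢
  constructor
  · have h2 : τ.symm (-τ c) < τ.symm y := symm_mono τ hmono h.1
    rw [symm_odd τ hodd, Equiv.symm_apply_apply] at h2
    linarith
  · have h2 : τ.symm y < τ.symm (τ c) := symm_mono τ hmono h.2
    rwa [Equiv.symm_apply_apply] at h2

/-- ### the axes are contained in the closure of the orbit -/
lemma axes_subset_closure (hmono : StrictMono σ) (hodd : ∀ x : ℝ, σ (-x) = -σ x) (p : ℝ × ℝ)
    (hax : ∀ L : List Bool, ((fwd σ L).symm p).2 ≠ 0)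
    (hay : ∀ L : List Bool, ((fwd σ L) p).1 ≠ 0)
    (hx0 : p.1 ≠ 0) (hy0 : p.2 ≠ 0)
    (a : ℝ × ℝ) (ha : a.1 = 0 ∨ a.2 = 0) : a ∈ closure (orb σ p) := by
  rw [Metric.mem_closure_iff]
  intro δ hδ
  have hδ2 : 0 < δ / 2 := by linarith
  rcases ha with ha | ha
  · -- a on the y-axis; use powers of vmap
    set ε : ℝ := min (δ / 2) (σ.symm (δ / 2)) with hε
    have hεpos : 0 < ε := lt_min hδ2 (symm_pos σ hmono hodd hδ2)
    obtain ⟨g, hg, h1, h2, h3, h4⟩ := small_orbit σ hmono hodd p hax hay hx0 hy0 hεpos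
    set q : ℝ × ℝ := g p with hq
    have hsne : σ q.1 ≠ 0 := by
      intro hcon
      apply h1
      have := congrArg ⇑σ.symm hcon
      rwa [Equiv.symm_apply_apply, symm0 σ hodd] at this
    obtain ⟨k, hk⟩ := int_approx (a.2 - q.2) (σ q.1) hsne
    refine ⟨((vmap σ) ^ k * g) p, ⟨(vmap σ) ^ k * g,
      mul_mem (zpow_mem (vmap_mem_Gam σ) k) hg, rfl⟩, ?_⟩
    have hval : ((vmap σ) ^ k * g) p = (q.1, q.2 + k * σ q.1) := by
      rw [Equiv.Perm.mul_apply, ← hq, vmap_zpow]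
    rw [hval, Prod.dist_eq]
    have habs : |σ q.1| < δ / 2 := by
      have h3' : |q.1| < σ.symm (δ / 2) := lt_of_lt_of_le h3 (min_le_right _ _)
      have habs' := abs_symm_lt σ.symm (symm_mono σ hmono) (symm_odd σ hodd) hδ2 h3'
      rwa [Equiv.symm_symm] at habs' 
    have hb1 : dist a.1 q.1 < δ := by
      rw [Real.dist_eq, ha]
      have : |q.1| < δ / 2 := lt_of_lt_of_le h3 (min_le_left _ _)
      rw [abs_sub_comm]
      simpa using lt_trans this (by linarith)
    have hb2 : dist a.2 (q.2 + k * σ q.1) < δ := by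
      rw [Real.dist_eq]
      have : a.2 - (q.2 + k * σ q.1) = (a.2 - q.2) - k * σ q.1 := by ring
      rw [this]
      calc |a.2 - q.2 - k * σ q.1| ≤ |σ q.1| := hk
        _ < δ / 2 := habs
        _ < δ := by linarith
    exact max_lt hb1 hb2
  · -- a on the x-axis; use powers of hmap
    set ε : ℝ := min (δ / 2) (σ (δ / 2)) with hε
    have hεpos : 0 < ε := lt_min hδ2 (sigma_pos σ hmono hodd hδ2)
    obtain ⟨g, hg, h1, h2, h3, h4⟩ := small_orbit σ hmono hodd p hax hay hx0 hy0 hεpos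
    set q : ℝ × ℝ := g p with hq
    have hsne : σ.symm q.2 ≠ 0 := by
      intro hcon
      apply h2
      have := congrArg ⇑σ hcon
      rwa [Equiv.apply_symm_apply, sigma0 σ hodd] at this
    obtain ⟨k, hk⟩ := int_approx (a.1 - q.1) (σ.symm q.2) hsne
    refine ⟨((hmap σ) ^ k * g) p, ⟨(hmap σ) ^ k * g,
      mul_mem (zpow_mem (hmap_mem_Gam σ) k) hg, rfl⟩, ?_⟩
    have hval : ((hmap σ) ^ k * g) p = (q.1 + k * σ.symm q.2, q.2) := by
      rw [Equiv.Perm.mul_apply, ← hq, hmap_zpow]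
    rw [hval, Prod.dist_eq]
    have habs : |σ.symm q.2| < δ / 2 := by
      have h4' : |q.2| < σ (δ / 2) := lt_of_lt_of_le h4 (min_le_right _ _)
      exact abs_symm_lt σ hmono hodd hδ2 h4'
    have hb2 : dist a.2 q.2 < δ := by
      rw [Real.dist_eq, ha]
      have : |q.2| < δ / 2 := lt_of_lt_of_le h4 (min_le_left _ _)
      rw [abs_sub_comm]
      simpa using lt_trans this (by linarith)
    have hb1 : dist a.1 (q.1 + k * σ.symm q.2) < δ := by
      rw [Real.dist_eq]
      have : a.1 - (q.1 + k * σ.symm q.2) = (a.1 - q.1) - k * σ.symm q.2 := by ring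
      rw [this]
      calc |a.1 - q.1 - k * σ.symm q.2| ≤ |σ.symm q.2| := hk
        _ < δ / 2 := habs
        _ < δ := by linarith
    exact max_lt hb1 hb2


open MeasureTheory in
lemma shear2_mp (f : ℝ → ℝ) (hf : Measurable f) :
    MeasurePreserving (fun q : ℝ × ℝ => (q.1, q.2 + f q.1)) volume volume := by
  have hT : Measurable fun q : ℝ × ℝ => (q.1, q.2 + f q.1) :=
    measurable_fst.prodMk (measurable_snd.add (hf.comp measurable_fst))
  refine ⟨hT, ?_⟩
  refine Measure.ext fun s hs => ?_
  rw [Measure.map_apply hT hs]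
  rw [Measure.volume_eq_prod]
  rw [Measure.prod_apply (hT hs), Measure.prod_apply hs]
  refine MeasureTheory.lintegral_congr fun x => ?_
  have hslice : (Prod.mk x ⁻¹' ((fun q : ℝ × ℝ => (q.1, q.2 + f q.1)) ⁻¹' s)) =
      (fun y : ℝ => y + f x) ⁻¹' (Prod.mk x ⁻¹' s) := rfl
  rw [hslice, measure_preimage_add_right]

open MeasureTheory in
lemma swap_mp : MeasurePreserving (Prod.swap : ℝ × ℝ → ℝ × ℝ) volume volume := by
  rw [Measure.volume_eq_prod]
  exact Measure.measurePreserving_swap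

open MeasureTheory in
lemma shear1_mp (f : ℝ → ℝ) (hf : Measurable f) :
    MeasurePreserving (fun q : ℝ × ℝ => (q.1 + f q.2, q.2)) volume volume := by
  have h : (fun q : ℝ × ℝ => (q.1 + f q.2, q.2)) =
      Prod.swap ∘ (fun q : ℝ × ℝ => (q.1, q.2 + f q.1)) ∘ Prod.swap := by
    funext q; rfl
  rw [h]
  exact (swap_mp.comp (shear2_mp f hf)).comp swap_mp

open MeasureTheory in
lemma gen_symm_mp (hmono : StrictMono σ) (b : Bool) :
    MeasurePreserving ⇑(gen σ b).symm volume volume := by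
  cases b
  · have h : ⇑(gen σ false).symm = fun q : ℝ × ℝ => (q.1, q.2 + (fun x => -σ x) q.1) := by
      funext q
      simp [gen, sub_eq_add_neg]
    rw [h]
    exact shear2_mp _ ((sigma_cont σ hmono).measurable.neg)
  · have h : ⇑(gen σ true).symm = fun q : ℝ × ℝ => (q.1 + (fun x => -σ.symm x) q.2, q.2) := by
      funext q
      simp [gen, sub_eq_add_neg]
    rw [h]
    exact shear1_mp _ ((sigma_symm_cont σ hmono).measurable.neg)

open MeasureTheory in
lemma fwd_symm_mp (hmono : StrictMono σ) (L : List Bool) :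
    MeasurePreserving ⇑(fwd σ L).symm volume volume := by
  induction L with
  | nil =>
    have h : ⇑(fwd σ ([] : List Bool)).symm = id := by funext x; rfl
    rw [h]
    exact MeasurePreserving.id _
  | cons a t ih =>
    have h : ⇑(fwd σ (a :: t)).symm = ⇑(fwd σ t).symm ∘ ⇑(gen σ a).symm := by
      funext x
      rw [Function.comp_apply, fwd_cons, mul_symm_apply]
    rw [h]
    exact ih.comp (gen_symm_mp σ hmono a)

/-- ### intermediate value argument for integer quotients -/
lemma ivt_floor (B : Set (ℝ × ℝ)) (hB : IsPreconnected B) (φ : ℝ × ℝ → ℝ)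
    (hφ : ContinuousOn φ B) :
    (∃ z₀ ∈ B, ∃ N : ℤ, φ z₀ = N) ∨ (∀ z₁ ∈ B, ∀ z₂ ∈ B, ⌊φ z₁⌋ = ⌊φ z₂⌋) := by
  by_cases hc : ∀ z₁ ∈ B, ∀ z₂ ∈ B, ⌊φ z₁⌋ = ⌊φ z₂⌋
  · exact Or.inr hc
  · left
    push_neg at hc
    obtain ⟨z₁, hz₁, z₂, hz₂, hne⟩ := hc
    have himg := (hB.image φ hφ).ordConnected
    rcases lt_or_gt_of_ne hne with hlt | hlt
    · have h1 : φ z₁ < (⌊φ z₂⌋ : ℝ) := by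
        have hfl : (⌊φ z₁⌋ : ℝ) + 1 ≤ (⌊φ z₂⌋ : ℝ) := by exact_mod_cast hlt
        linarith [Int.lt_floor_add_one (φ z₁)]
      have h2 : (⌊φ z₂⌋ : ℝ) ≤ φ z₂ := Int.floor_le _
      have hmem : (⌊φ z₂⌋ : ℝ) ∈ φ '' B :=
        himg.out ⟨z₁, hz₁, rfl⟩ ⟨z₂, hz₂, rfl⟩ ⟨le_of_lt h1, h2⟩
      obtain ⟨z₀, hz₀, he⟩ := hmem
      exact ⟨z₀, hz₀, ⌊φ z₂⌋, he⟩
    · have h1 : φ z₂ < (⌊φ z₁⌋ : ℝ) := by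
        have hfl : (⌊φ z₂⌋ : ℝ) + 1 ≤ (⌊φ z₁⌋ : ℝ) := by exact_mod_cast hlt
        linarith [Int.lt_floor_add_one (φ z₂)]
      have h2 : (⌊φ z₁⌋ : ℝ) ≤ φ z₁ := Int.floor_le _
      have hmem : (⌊φ z₁⌋ : ℝ) ∈ φ '' B :=
        himg.out ⟨z₂, hz₂, rfl⟩ ⟨z₁, hz₁, rfl⟩ ⟨le_of_lt h1, h2⟩
      obtain ⟨z₀, hz₀, he⟩ := hmem
      exact ⟨z₀, hz₀, ⌊φ z₁⌋, he⟩


/-- ### uniform y-reduction over a connected set -/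
lemma step_y (hmono : StrictMono σ) (hodd : ∀ x : ℝ, σ (-x) = -σ x)
    (B : Set (ℝ × ℝ)) (hB : IsPreconnected B) (hne : B.Nonempty)
    (H : ∀ z ∈ B, ∀ M : List Bool, ((fwd σ M).symm z).1 ≠ 0 ∧ ((fwd σ M).symm z).2 ≠ 0)
    (L : List Bool)
    (hpos : ∀ z ∈ B, 0 < ((fwd σ L).symm z).1 ∧ 0 < ((fwd σ L).symm z).2) :
    ∃ L' : List Bool, ∀ z ∈ B,
      ((fwd σ L').symm z).1 = ((fwd σ L).symm z).1 ∧
      0 < ((fwd σ L').symm z).2 ∧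
      ((fwd σ L').symm z).2 < σ (((fwd σ L).symm z).1) := by
  set φ : ℝ × ℝ → ℝ :=
    fun z => ((fwd σ L).symm z).2 / σ (((fwd σ L).symm z).1) with hφdef
  have hden : ∀ z ∈ B, 0 < σ (((fwd σ L).symm z).1) :=
    fun z hz => sigma_pos σ hmono hodd (hpos z hz).1
  have hφpos : ∀ z ∈ B, 0 < φ z :=
    fun z hz => div_pos (hpos z hz).2 (hden z hz)
  have hφapp : ∀ z, φ z = ((fwd σ L).symm z).2 / σ (((fwd σ L).symm z).1) := fun z => rfl
  have hφ : ContinuousOn φ B := by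
    apply ContinuousOn.div
    · exact (continuous_snd.comp (cont_fwd_symm σ hmono L)).continuousOn
    · exact ((sigma_cont σ hmono).comp
        (continuous_fst.comp (cont_fwd_symm σ hmono L))).continuousOn
    · exact fun z hz => ne_of_gt (hden z hz)
  rcases ivt_floor B hB φ hφ with ⟨z₀, hz₀, N, hN⟩ | hconst
  · exfalso
    have hNpos : 0 < (N : ℝ) := by rw [← hN]; exact hφpos z₀ hz₀
    have hNnat : ((N.toNat : ℕ) : ℝ) = (N : ℝ) := by
      have : (0 : ℤ) ≤ N := by exact_mod_cast le_of_lt hNpos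
      exact_mod_cast Int.toNat_of_nonneg this
    have hval : (fwd σ (L ++ List.replicate N.toNat false)).symm z₀ =
        (((fwd σ L).symm z₀).1,
          ((fwd σ L).symm z₀).2 - N.toNat * σ (((fwd σ L).symm z₀).1)) := by
      rw [fwd_append_symm_apply, fwd_replicate_false, vmap_pow_symm]
    have hzero : ((fwd σ L).symm z₀).2 - N.toNat * σ (((fwd σ L).symm z₀).1) = 0 := by
      rw [hNnat]
      have h := hN
      rw [hφapp z₀, div_eq_iff (ne_of_gt (hden z₀ hz₀))] at h
      linarith
    apply (H z₀ hz₀ (L ++ List.replicate N.toNat false)).2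
    rw [hval, hzero]
  · obtain ⟨z₀, hz₀⟩ := hne
    set n : ℕ := (⌊φ z₀⌋).toNat with hn
    refine ⟨L ++ List.replicate n false, ?_⟩
    intro z hz
    have hfl : ⌊φ z⌋ = ⌊φ z₀⌋ := hconst z hz z₀ hz₀
    have hnz : ((n : ℕ) : ℝ) = (⌊φ z⌋ : ℝ) := by
      have h0 : (0 : ℤ) ≤ ⌊φ z₀⌋ := Int.floor_nonneg.mpr (le_of_lt (hφpos z₀ hz₀))
      rw [hfl, hn]
      exact_mod_cast Int.toNat_of_nonneg h0
    have hval : (fwd σ (L ++ List.replicate n false)).symm z =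
        (((fwd σ L).symm z).1,
          ((fwd σ L).symm z).2 - n * σ (((fwd σ L).symm z).1)) := by
      rw [fwd_append_symm_apply, fwd_replicate_false, vmap_pow_symm]
    set x : ℝ := ((fwd σ L).symm z).1
    set y : ℝ := ((fwd σ L).symm z).2
    have hx : 0 < σ x := hden z hz
    have hy' : 0 ≤ y - n * σ x := by
      have hfl2 : (⌊φ z⌋ : ℝ) ≤ φ z := Int.floor_le _
      have : (n : ℝ) * σ x ≤ y := by
        rw [hnz]
        calc (⌊φ z⌋ : ℝ) * σ x ≤ φ z * σ x :=
              mul_le_mul_of_nonneg_right hfl2 (le_of_lt hx)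
          _ = y := by rw [hφapp z]; exact div_mul_cancel₀ _ (ne_of_gt hx)
      linarith
    have hy'' : y - n * σ x < σ x := by
      have hfl2 : φ z < (⌊φ z⌋ : ℝ) + 1 := Int.lt_floor_add_one _
      have : y < ((n : ℝ) + 1) * σ x := by
        rw [hnz]
        calc y = φ z * σ x := by
              rw [hφapp z]; exact (div_mul_cancel₀ _ (ne_of_gt hx)).symm
          _ < ((⌊φ z⌋ : ℝ) + 1) * σ x := mul_lt_mul_of_pos_right hfl2 hx
      nlinarith
    have hyne : y - n * σ x ≠ 0 := by
      have := (H z hz (L ++ List.replicate n false)).2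
      rw [hval] at this
      exact this
    refine ⟨by rw [hval], ?_, ?_⟩
    · rw [hval]
      exact lt_of_le_of_ne hy' (Ne.symm hyne)
    · rw [hval]
      exact hy''

/-- ### uniform x-reduction over a connected set -/
lemma step_x (hmono : StrictMono σ) (hodd : ∀ x : ℝ, σ (-x) = -σ x)
    (B : Set (ℝ × ℝ)) (hB : IsPreconnected B) (hne : B.Nonempty)
    (H : ∀ z ∈ B, ∀ M : List Bool, ((fwd σ M).symm z).1 ≠ 0 ∧ ((fwd σ M).symm z).2 ≠ 0)
    (L : List Bool)
    (hpos : ∀ z ∈ B, 0 < ((fwd σ L).symm z).1 ∧ 0 < ((fwd σ L).symm z).2 ∧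
      ((fwd σ L).symm z).2 < σ (((fwd σ L).symm z).1)) :
    ∃ L' : List Bool, ∀ z ∈ B,
      ((fwd σ L').symm z).2 = ((fwd σ L).symm z).2 ∧
      0 < ((fwd σ L').symm z).1 ∧
      2 * ((fwd σ L').symm z).1 < ((fwd σ L).symm z).1 := by
  set φ : ℝ × ℝ → ℝ :=
    fun z => ((fwd σ L).symm z).1 / σ.symm (((fwd σ L).symm z).2) with hφdef
  have hden : ∀ z ∈ B, 0 < σ.symm (((fwd σ L).symm z).2) :=
    fun z hz => symm_pos σ hmono hodd (hpos z hz).2.1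
  have hdlt : ∀ z ∈ B, σ.symm (((fwd σ L).symm z).2) < ((fwd σ L).symm z).1 := by
    intro z hz
    have h := symm_mono σ hmono (hpos z hz).2.2
    rwa [Equiv.symm_apply_apply] at h
  have hφgt : ∀ z ∈ B, 1 < φ z :=
    fun z hz => (one_lt_div (hden z hz)).mpr (hdlt z hz)
  have hφapp : ∀ z, φ z = ((fwd σ L).symm z).1 / σ.symm (((fwd σ L).symm z).2) :=
    fun z => rfl
  have hφ : ContinuousOn φ B := by
    apply ContinuousOn.div
    · exact (continuous_fst.comp (cont_fwd_symm σ hmono L)).continuousOn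
    · exact ((sigma_symm_cont σ hmono).comp
        (continuous_snd.comp (cont_fwd_symm σ hmono L))).continuousOn
    · exact fun z hz => ne_of_gt (hden z hz)
  rcases ivt_floor B hB φ hφ with ⟨z₀, hz₀, N, hN⟩ | hconst
  · exfalso
    have hNpos : 0 < (N : ℝ) := by rw [← hN]; linarith [hφgt z₀ hz₀]
    have hNnat : ((N.toNat : ℕ) : ℝ) = (N : ℝ) := by
      have : (0 : ℤ) ≤ N := by exact_mod_cast le_of_lt hNpos
      exact_mod_cast Int.toNat_of_nonneg this
    have hval : (fwd σ (L ++ List.replicate N.toNat true)).symm z₀ =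
        (((fwd σ L).symm z₀).1 - N.toNat * σ.symm (((fwd σ L).symm z₀).2),
          ((fwd σ L).symm z₀).2) := by
      rw [fwd_append_symm_apply, fwd_replicate_true, hmap_pow_symm]
    have hzero : ((fwd σ L).symm z₀).1 - N.toNat * σ.symm (((fwd σ L).symm z₀).2) = 0 := by
      rw [hNnat]
      have h := hN
      rw [hφapp z₀, div_eq_iff (ne_of_gt (hden z₀ hz₀))] at h
      linarith
    apply (H z₀ hz₀ (L ++ List.replicate N.toNat true)).1
    rw [hval, hzero]
  · obtain ⟨z₀, hz₀⟩ := hne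
    set m : ℕ := (⌊φ z₀⌋).toNat with hm
    refine ⟨L ++ List.replicate m true, ?_⟩
    intro z hz
    have hfl : ⌊φ z⌋ = ⌊φ z₀⌋ := hconst z hz z₀ hz₀
    have hmz : ((m : ℕ) : ℝ) = (⌊φ z⌋ : ℝ) := by
      have h0 : (0 : ℤ) ≤ ⌊φ z₀⌋ := Int.floor_nonneg.mpr (by linarith [hφgt z₀ hz₀])
      rw [hfl, hm]
      exact_mod_cast Int.toNat_of_nonneg h0
    have hm1 : 1 ≤ (m : ℝ) := by
      have h1 : (1 : ℤ) ≤ ⌊φ z⌋ := by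
        rw [Int.le_floor]
        exact_mod_cast le_of_lt (hφgt z hz)
      rw [hmz]
      exact_mod_cast h1
    have hval : (fwd σ (L ++ List.replicate m true)).symm z =
        (((fwd σ L).symm z).1 - m * σ.symm (((fwd σ L).symm z).2),
          ((fwd σ L).symm z).2) := by
      rw [fwd_append_symm_apply, fwd_replicate_true, hmap_pow_symm]
    set x : ℝ := ((fwd σ L).symm z).1
    set y : ℝ := ((fwd σ L).symm z).2
    set s : ℝ := σ.symm y
    have hs : 0 < s := hden z hz
    have hx' : 0 ≤ x - m * s := by
      have hfl2 : (⌊φ z⌋ : ℝ) ≤ φ z := Int.floor_le _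
      have : (m : ℝ) * s ≤ x := by
        rw [hmz]
        calc (⌊φ z⌋ : ℝ) * s ≤ φ z * s := mul_le_mul_of_nonneg_right hfl2 (le_of_lt hs)
          _ = x := by rw [hφapp z]; exact div_mul_cancel₀ _ (ne_of_gt hs)
      linarith
    have hx'' : x - m * s < s := by
      have hfl2 : φ z < (⌊φ z⌋ : ℝ) + 1 := Int.lt_floor_add_one _
      have : x < ((m : ℝ) + 1) * s := by
        rw [hmz]
        calc x = φ z * s := by
              rw [hφapp z]; exact (div_mul_cancel₀ _ (ne_of_gt hs)).symm
          _ < ((⌊φ z⌋ : ℝ) + 1) * s := mul_lt_mul_of_pos_right hfl2 hs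
      nlinarith
    have hxne : x - m * s ≠ 0 := by
      have := (H z hz (L ++ List.replicate m true)).1
      rw [hval] at this
      exact this
    have hxpos : 0 < x - m * s := lt_of_le_of_ne hx' (Ne.symm hxne)
    refine ⟨by rw [hval], ?_, ?_⟩
    · rw [hval]; exact hxpos
    · rw [hval]
      show 2 * (x - m * s) < x
      nlinarith [hm1, hs, hx'']


lemma one_le_two_pow (k : ℕ) : (1:ℝ) ≤ 2 ^ k := by
  induction k with
  | zero => norm_num
  | succ k ih => rw [pow_succ]; nlinarith

open MeasureTheory in
lemma ball_meets_axes (hmono : StrictMono σ) (hodd : ∀ x : ℝ, σ (-x) = -σ x)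
    (t : ℝ × ℝ) (r : ℝ) (hr : 0 < r)
    (hq : ∀ z ∈ Metric.ball t r, 0 < z.1 ∧ 0 < z.2) :
    ∃ z ∈ Metric.ball t r, ∃ L : List Bool,
      ((fwd σ L).symm z).1 = 0 ∨ ((fwd σ L).symm z).2 = 0 := by
  by_contra Hc
  push_neg at Hc
  set B := Metric.ball t r with hB
  have H : ∀ z ∈ B, ∀ M : List Bool,
      ((fwd σ M).symm z).1 ≠ 0 ∧ ((fwd σ M).symm z).2 ≠ 0 := Hc
  have hBconn : IsPreconnected B := (convex_ball t r).isPreconnected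
  have htB : t ∈ B := Metric.mem_ball_self hr
  have hBne : B.Nonempty := ⟨t, htB⟩
  have ht1 : 0 < t.1 := (hq t htB).1
  set X0 : ℝ := t.1 + r with hX0
  have hX0pos : 0 < X0 := by rw [hX0]; linarith
  have hxle : ∀ z ∈ B, z.1 ≤ X0 := by
    intro z hz
    have hd : dist z t < r := Metric.mem_ball.mp hz
    have h1 : dist z.1 t.1 ≤ dist z t := by
      rw [Prod.dist_eq]; exact le_max_left _ _
    have h2 : |z.1 - t.1| < r := by
      rw [← Real.dist_eq]; exact lt_of_le_of_lt h1 hd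
    have h3 : z.1 - t.1 < r := lt_of_le_of_lt (le_abs_self _) h2
    rw [hX0]; linarith
  have hsig2 : 0 < σ (2 * X0) := sigma_pos σ hmono hodd (by linarith)
  have main : ∀ k : ℕ, ∃ L : List Bool, ∀ z ∈ B,
      0 < ((fwd σ L).symm z).1 ∧ ((fwd σ L).symm z).1 ≤ X0 / 2 ^ k ∧
      0 < ((fwd σ L).symm z).2 ∧ ((fwd σ L).symm z).2 ≤ σ (2 * X0) := by
    intro k
    induction k with
    | zero =>
      have hpos0 : ∀ z ∈ B,
          0 < ((fwd σ ([] : List Bool)).symm z).1 ∧ 0 < ((fwd σ ([] : List Bool)).symm z).2 := by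
        intro z hz
        simpa [Equiv.Perm.one_symm] using hq z hz
      obtain ⟨L', hL'⟩ := step_y σ hmono hodd B hBconn hBne H [] hpos0
      refine ⟨L', fun z hz => ?_⟩
      obtain ⟨he, hy, hylt⟩ := hL' z hz
      rw [fwd_nil_symm_apply] at he hylt
      have hz1 : 0 < z.1 := (hq z hz).1
      refine ⟨by rw [he]; exact hz1, ?_, hy, ?_⟩
      · rw [he, pow_zero, div_one]; exact hxle z hz
      · have : σ z.1 ≤ σ (2 * X0) := hmono.monotone (by linarith [hxle z hz])
        linarith
    | succ k ih =>
      obtain ⟨L, hL⟩ := ih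
      have hpos : ∀ z ∈ B, 0 < ((fwd σ L).symm z).1 ∧ 0 < ((fwd σ L).symm z).2 :=
        fun z hz => ⟨(hL z hz).1, (hL z hz).2.2.1⟩
      obtain ⟨L1, hL1⟩ := step_y σ hmono hodd B hBconn hBne H L hpos
      have hpos1 : ∀ z ∈ B, 0 < ((fwd σ L1).symm z).1 ∧ 0 < ((fwd σ L1).symm z).2 ∧
          ((fwd σ L1).symm z).2 < σ (((fwd σ L1).symm z).1) := by
        intro z hz
        obtain ⟨he, hy, hylt⟩ := hL1 z hz
        refine ⟨by rw [he]; exact (hL z hz).1, hy, by rw [he]; exact hylt⟩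
      obtain ⟨L2, hL2⟩ := step_x σ hmono hodd B hBconn hBne H L1 hpos1
      refine ⟨L2, fun z hz => ?_⟩
      obtain ⟨hey, hx2, hx2lt⟩ := hL2 z hz
      obtain ⟨he, hy1, hylt1⟩ := hL1 z hz
      obtain ⟨_, hxk, _, _⟩ := hL z hz
      have hxx : ((fwd σ L1).symm z).1 = ((fwd σ L).symm z).1 := he
      refine ⟨hx2, ?_, ?_, ?_⟩
      · rw [hxx] at hx2lt
        have hp2 : (0 : ℝ) < 2 ^ k := by positivity
        rw [pow_succ, le_div_iff₀ (by positivity)]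
        rw [le_div_iff₀ hp2] at hxk
        nlinarith
      · rw [hey]; exact hy1
      · rw [hey]
        have hb1 : ((fwd σ L).symm z).1 ≤ 2 * X0 := by
          have h2k : (1 : ℝ) ≤ 2 ^ k := one_le_two_pow k
          have : X0 / 2 ^ k ≤ X0 := by
            rw [div_le_iff₀ (by positivity)]
            nlinarith
          linarith
        have : σ (((fwd σ L).symm z).1) ≤ σ (2 * X0) := hmono.monotone hb1
        linarith
  -- measure contradiction
  have hvolB : volume B = ENNReal.ofReal (2 * r) * ENNReal.ofReal (2 * r) := by
    rw [hB, ← ball_prod_same, Measure.volume_eq_prod, Measure.prod_prod,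
      Real.volume_ball, Real.volume_ball]
  obtain ⟨k, hk⟩ : ∃ k : ℕ, X0 / 2 ^ k * σ (2 * X0) < 2 * r * (2 * r) := by
    obtain ⟨k, hk⟩ := pow_unbounded_of_one_lt
      (X0 * σ (2 * X0) / (2 * r * (2 * r))) (by norm_num : (1:ℝ) < 2)
    refine ⟨k, ?_⟩
    have h4 : (0:ℝ) < 2 * r * (2 * r) := by positivity
    rw [div_lt_iff₀ h4] at hk
    rw [div_mul_eq_mul_div, div_lt_iff₀ (by positivity : (0:ℝ) < 2 ^ k)]
    linarith
  obtain ⟨L, hL⟩ := main k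
  have hsub : B ⊆ ⇑(fwd σ L).symm ⁻¹'
      (Set.Ioc 0 (X0 / 2 ^ k) ×ˢ Set.Ioc 0 (σ (2 * X0))) := by
    intro z hz
    obtain ⟨h1, h2, h3, h4⟩ := hL z hz
    exact ⟨⟨h1, h2⟩, ⟨h3, h4⟩⟩
  have hbox : MeasurableSet (Set.Ioc (0:ℝ) (X0 / 2 ^ k) ×ˢ Set.Ioc (0:ℝ) (σ (2 * X0))) :=
    measurableSet_Ioc.prod measurableSet_Ioc
  have hle : volume B ≤ ENNReal.ofReal (X0 / 2 ^ k) * ENNReal.ofReal (σ (2 * X0)) := by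
    calc volume B ≤ volume (⇑(fwd σ L).symm ⁻¹'
        (Set.Ioc 0 (X0 / 2 ^ k) ×ˢ Set.Ioc 0 (σ (2 * X0)))) := measure_mono hsub
      _ = volume (Set.Ioc (0:ℝ) (X0 / 2 ^ k) ×ˢ Set.Ioc (0:ℝ) (σ (2 * X0))) :=
          (fwd_symm_mp σ hmono L).measure_preimage hbox.nullMeasurableSet
      _ = ENNReal.ofReal (X0 / 2 ^ k) * ENNReal.ofReal (σ (2 * X0)) := by
          rw [Measure.volume_eq_prod, Measure.prod_prod, Real.volume_Ioc, Real.volume_Ioc]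
          rw [sub_zero, sub_zero]
  rw [hvolB, ← ENNReal.ofReal_mul (by positivity), ← ENNReal.ofReal_mul (by positivity)] at hle
  have hfin := (ENNReal.ofReal_le_ofReal_iff (by positivity)).mp hle
  linarith


lemma dist_negP (a b : ℝ × ℝ) : dist (negP a) (negP b) = dist a b := by
  rw [Prod.dist_eq, Prod.dist_eq]
  simp only [negP_apply, Real.dist_eq]
  rw [show -a.1 - -b.1 = -(a.1 - b.1) by ring, show -a.2 - -b.2 = -(a.2 - b.2) by ring,
    abs_neg, abs_neg]

lemma dist_flipP (a b : ℝ × ℝ) : dist (flipP a) (flipP b) = dist a b := by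
  rw [Prod.dist_eq, Prod.dist_eq]
  simp only [flipP_apply, Real.dist_eq]
  rw [show -a.2 - -b.2 = -(a.2 - b.2) by ring, abs_neg]

@[simp] lemma negP_negP (a : ℝ × ℝ) : negP (negP a) = a := by simp
@[simp] lemma flipP_flipP (a : ℝ × ℝ) : flipP (flipP a) = a := by simp

/-- quadrant (+,+) version with group element -/
lemma bma_pp (hmono : StrictMono σ) (hodd : ∀ x : ℝ, σ (-x) = -σ x)
    (w : ℝ × ℝ) (r : ℝ) (hr : 0 < r)
    (hq : ∀ u ∈ Metric.ball w r, 0 < u.1 ∧ 0 < u.2) :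
    ∃ z ∈ Metric.ball w r, ∃ g ∈ Gam σ, (g z).1 = 0 ∨ (g z).2 = 0 := by
  obtain ⟨z, hz, L, hL⟩ := ball_meets_axes σ hmono hodd w r hr hq
  refine ⟨z, hz, (fwd σ L)⁻¹, inv_mem (fwd_mem_Gam σ L), ?_⟩
  have he : ((fwd σ L)⁻¹ : Equiv.Perm (ℝ × ℝ)) z = (fwd σ L).symm z := rfl
  rw [he]
  exact hL

/-- quadrant (+,-) version with group element -/
lemma bma_pn (hmono : StrictMono σ) (hodd : ∀ x : ℝ, σ (-x) = -σ x)
    (w : ℝ × ℝ) (r : ℝ) (hr : 0 < r)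
    (hq : ∀ u ∈ Metric.ball w r, 0 < u.1 ∧ u.2 < 0) :
    ∃ z ∈ Metric.ball w r, ∃ g ∈ Gam σ, (g z).1 = 0 ∨ (g z).2 = 0 := by
  have hq' : ∀ u ∈ Metric.ball (flipP w) r, 0 < u.1 ∧ 0 < u.2 := by
    intro u hu
    have hmem : flipP u ∈ Metric.ball w r := by
      rw [Metric.mem_ball] at hu ⊢
      calc dist (flipP u) w = dist (flipP (flipP u)) (flipP w) := (dist_flipP _ _).symm
        _ = dist u (flipP w) := by rw [flipP_flipP]
        _ < r := hu
    obtain ⟨ha, hb⟩ := hq (flipP u) hmem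
    simp only [flipP_apply] at ha hb
    exact ⟨ha, by linarith⟩
  obtain ⟨zt, hzt, L, hL⟩ := ball_meets_axes σ hmono hodd (flipP w) r hr hq'
  refine ⟨flipP zt, ?_, fwd σ L.reverse, fwd_mem_Gam σ _, ?_⟩
  · rw [Metric.mem_ball] at hzt ⊢
    calc dist (flipP zt) w = dist (flipP (flipP zt)) (flipP w) := (dist_flipP _ _).symm
      _ = dist zt (flipP w) := by rw [flipP_flipP]
      _ < r := hzt
  · have he : fwd σ L.reverse (flipP zt) = flipP ((fwd σ L.reverse.reverse).symm zt) :=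
      fwd_flip σ hodd L.reverse zt
    rw [List.reverse_reverse] at he
    rw [he]
    simp only [flipP_apply]
    rcases hL with h | h
    · exact Or.inl h
    · exact Or.inr (by rw [h, neg_zero])

end StmtAux

open StmtAux in
/-- Every σ-irrational point has a dense orbit under the group Γ(σ)
generated by h_σ and v_σ. -/
theorem stmt_8 (σ : ℝ ≃ ℝ) (hmono : StrictMono σ) (hodd : ∀ x : ℝ, σ (-x) = -σ x)
    (p : ℝ × ℝ) (hp : ∀ L ∈ ratLines σ, p ∉ L) :
    Dense {q : ℝ × ℝ | ∃ g ∈ (Subgroup.closure {hmap σ, vmap σ} : Subgroup (Equiv.Perm (ℝ × ℝ))),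
      g p = q} := by
  have hax := irrat_x σ hp
  have hay := irrat_y σ hp
  obtain ⟨hx0, hy0⟩ := irrat_axes σ hp
  have haxes := axes_subset_closure σ hmono hodd p hax hay hx0 hy0
  have hSorb : {q : ℝ × ℝ | ∃ g ∈ (Subgroup.closure {hmap σ, vmap σ} :
      Subgroup (Equiv.Perm (ℝ × ℝ))), g p = q} = orb σ p := rfl
  rw [hSorb]
  intro w
  have hcc : w ∈ closure (closure (orb σ p)) → w ∈ closure (orb σ p) := by
    rw [closure_closure]; exact id
  apply hcc
  rw [Metric.mem_closure_iff]
  intro ε hε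
  by_cases hw : w.1 = 0 ∨ w.2 = 0
  · exact ⟨w, haxes w hw, by simpa [dist_self] using hε⟩
  push_neg at hw
  obtain ⟨hw1, hw2⟩ := hw
  set r : ℝ := min ε (min |w.1| |w.2|) / 2 with hrdef
  have hmin : 0 < min ε (min |w.1| |w.2|) :=
    lt_min hε (lt_min (abs_pos.mpr hw1) (abs_pos.mpr hw2))
  have hrpos : 0 < r := by rw [hrdef]; linarith
  have hrx : r ≤ |w.1| / 2 := by
    rw [hrdef]
    have := min_le_right ε (min |w.1| |w.2|)
    have := min_le_left |w.1| |w.2|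
    linarith
  have hry : r ≤ |w.2| / 2 := by
    rw [hrdef]
    have := min_le_right ε (min |w.1| |w.2|)
    have := min_le_right |w.1| |w.2|
    linarith
  have hrε : r < ε := by
    rw [hrdef]
    have := min_le_left ε (min |w.1| |w.2|)
    linarith
  -- in every case produce z ∈ ball w r and g ∈ Gam σ with g z on the axes
  have key : ∃ z ∈ Metric.ball w r, ∃ g ∈ Gam σ, (g z).1 = 0 ∨ (g z).2 = 0 := by
    have hcoord : ∀ u ∈ Metric.ball w r, |u.1 - w.1| < r ∧ |u.2 - w.2| < r := by
      intro u hu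
      rw [Metric.mem_ball, Prod.dist_eq] at hu
      constructor
      · rw [← Real.dist_eq]; exact lt_of_le_of_lt (le_max_left _ _) hu
      · rw [← Real.dist_eq]; exact lt_of_le_of_lt (le_max_right _ _) hu
    rcases lt_or_gt_of_ne hw1 with hx | hx
    · -- w.1 < 0 ; work with negP w
      have habs1 : |w.1| = -w.1 := abs_of_neg hx
      have hq' : ∀ u ∈ Metric.ball (negP w) r, |u.1 - (negP w).1| < r ∧
          |u.2 - (negP w).2| < r := by
        intro u hu
        have hmem : negP u ∈ Metric.ball w r := by
          rw [Metric.mem_ball] at hu ⊢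
          calc dist (negP u) w = dist (negP (negP u)) (negP w) := (dist_negP _ _).symm
            _ = dist u (negP w) := by rw [negP_negP]
            _ < r := hu
        obtain ⟨ha, hb⟩ := hcoord (negP u) hmem
        simp only [negP_apply] at ha hb ⊢
        constructor
        · rw [show u.1 - -w.1 = -(-u.1 - w.1) by ring, abs_neg]; exact ha
        · rw [show u.2 - -w.2 = -(-u.2 - w.2) by ring, abs_neg]; exact hb
      have hres : ∃ z' ∈ Metric.ball (negP w) r, ∃ g ∈ Gam σ,
          (g z').1 = 0 ∨ (g z').2 = 0 := by
        rcases lt_or_gt_of_ne hw2 with hy | hy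
        · -- w.2 < 0, negP w in (+,+)
          apply bma_pp σ hmono hodd (negP w) r hrpos
          intro u hu
          obtain ⟨ha, hb⟩ := hq' u hu
          simp only [negP_apply] at ha hb
          have habs2 : |w.2| = -w.2 := abs_of_neg hy
          constructor
          · have := abs_lt.mp ha; rw [habs1] at hrx; linarith [this.1]
          · have := abs_lt.mp hb; rw [habs2] at hry; linarith [this.1]
        · -- w.2 > 0, negP w in (+,-)
          apply bma_pn σ hmono hodd (negP w) r hrpos
          intro u hu
          obtain ⟨ha, hb⟩ := hq' u hu
          simp only [negP_apply] at ha hb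
          have habs2 : |w.2| = w.2 := abs_of_pos hy
          constructor
          · have := abs_lt.mp ha; rw [habs1] at hrx; linarith [this.1]
          · have := abs_lt.mp hb; rw [habs2] at hry; linarith [this.2]
      obtain ⟨z', hz', g, hg, hgax⟩ := hres
      refine ⟨negP z', ?_, g, hg, ?_⟩
      · rw [Metric.mem_ball] at hz' ⊢
        calc dist (negP z') w = dist (negP (negP z')) (negP w) := (dist_negP _ _).symm
          _ = dist z' (negP w) := by rw [negP_negP]
          _ < r := hz'
      · have hcomm : g (negP (negP z')) = negP (g (negP z')) := Gam_neg σ hodd hg (negP z')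
        rw [negP_negP] at hcomm
        rw [hcomm] at hgax
        simp only [negP_apply, neg_eq_zero] at hgax
        exact hgax
    · -- w.1 > 0
      have habs1 : |w.1| = w.1 := abs_of_pos hx
      rcases lt_or_gt_of_ne hw2 with hy | hy
      · -- (+,-)
        apply bma_pn σ hmono hodd w r hrpos
        intro u hu
        obtain ⟨ha, hb⟩ := hcoord u hu
        have habs2 : |w.2| = -w.2 := abs_of_neg hy
        constructor
        · have := abs_lt.mp ha; rw [habs1] at hrx; linarith [this.1]
        · have := abs_lt.mp hb; rw [habs2] at hry; linarith [this.2]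
      · -- (+,+)
        apply bma_pp σ hmono hodd w r hrpos
        intro u hu
        obtain ⟨ha, hb⟩ := hcoord u hu
        have habs2 : |w.2| = w.2 := abs_of_pos hy
        constructor
        · have := abs_lt.mp ha; rw [habs1] at hrx; linarith [this.1]
        · have := abs_lt.mp hb; rw [habs2] at hry; linarith [this.1]
  obtain ⟨z, hzball, g, hg, hgax⟩ := key
  have hz1 : g z ∈ closure (orb σ p) := haxes (g z) hgax
  have hz2 : (g⁻¹ : Equiv.Perm (ℝ × ℝ)) (g z) ∈ closure (orb σ p) :=
    orbit_closure_invariant σ hmono (inv_mem hg) hz1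
  rw [← Equiv.Perm.mul_apply, inv_mul_cancel, Equiv.Perm.one_apply] at hz2
  refine ⟨z, hz2, ?_⟩
  rw [Metric.mem_ball] at hzball
  calc dist w z = dist z w := dist_comm _ _
    _ < r := hzball
    _ < ε := hrε
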